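/- For every i ∈ ℤ_{≥0}, the Bernoulli-Carlitz number BC_{q^i − 1} satisfies BC_{q^i − 1} = (−1)^i D_i / L_i^2 = Π(q^i − 1)/L_i; in particular BC_{q^i − 1} ≠ 0 and BC_{q^i − 1}/Π(q^i − 1) = 1/L_i. -/

import Mathlib

open Polynomial PowerSeries

noncomputable section

namespace Carlitz

variable (F : Type) [Field F] [Fintype F]

/-- `q`, the cardinality of the finite field of constants `𝔽_q`. -/
def q : ℕ := Fintype.card F

/-- The Carlitz polynomial `D_i = ∏_{j=0}^{i-1} (θ^{q^i} - θ^{q^j})` (with `D_0 = 1`). -/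
def Dpoly (i : ℕ) : Polynomial F :=
  ∏ j ∈ Finset.range i, (Polynomial.X ^ (q F) ^ i - Polynomial.X ^ (q F) ^ j)

/-- The Carlitz polynomial `L_i = ∏_{j=1}^{i} (θ - θ^{q^j})` (with `L_0 = 1`). -/
def Lpoly (i : ℕ) : Polynomial F :=
  ∏ j ∈ Finset.range i, (Polynomial.X - Polynomial.X ^ (q F) ^ (j + 1))

/-- The Carlitz factorial `Π(n) = ∏_i D_i^{n_i}` where `n = Σ_i n_i q^i` is the base-`q`
expansion of `n`.  This also equals the Carlitz gamma `Γ_{n+1}`. -/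
def cfact (n : ℕ) : Polynomial F :=
  ∏ i ∈ Finset.range (Nat.digits (q F) n).length,
    (Dpoly F i) ^ ((Nat.digits (q F) n).getD i 0)

/-- The inclusion `A = 𝔽_q[θ] → k = 𝔽_q(θ)`. -/
def toK : Polynomial F →+* RatFunc F := algebraMap _ _

/-- The Carlitz exponential `e_C(z) = Σ_{i≥0} z^{q^i}/D_i` as a power series over `k`. -/
def eC : PowerSeries (RatFunc F) :=
  PowerSeries.mk fun n => ∑ i ∈ Finset.range (n + 1),
    if (q F) ^ i = n then (toK F (Dpoly F i))⁻¹ else 0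

/-- The Bernoulli-Carlitz numbers `BC_n`, defined by `Σ_n BC_n z^n/Π(n) = z/e_C(z)`:
since `e_C(z) = z · u(z)` where `u(z) = Σ_m (coeff_{m+1} e_C) z^m` has constant term `1`,
we have `z/e_C(z) = u(z)⁻¹` and `BC_n = Π(n) · coeff_n (u⁻¹)`. -/
def BCnum (n : ℕ) : RatFunc F :=
  toK F (cfact F n) *
    PowerSeries.coeff n
      (PowerSeries.mk fun m => PowerSeries.coeff (m + 1) (eC F))⁻¹

/-- The Stirling-Carlitz numbers of the second kind `{n brace m}_C`, defined by
`Σ_n {n brace m}_C z^n/Π(n) = e_C(z)^m/Π(m)`, i.e. `{n brace m}_C = Π(n)·coeff_n(e_C^m)/Π(m)`. -/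
def StC (n m : ℕ) : RatFunc F :=
  toK F (cfact F n) * PowerSeries.coeff n (eC F ^ m) * (toK F (cfact F m))⁻¹

/-- The (finite) set of strictly decreasing tuples `i : Fin r → ℕ`,
`i_1 > i_2 > ⋯ > i_r ≥ 0`, with all values `< N`. -/
def decTuples (r N : ℕ) : Finset (Fin r → ℕ) :=
  (Finset.univ.filter fun i : Fin r → Fin N => ∀ a b : Fin r, a < b → i b < i a).image
    fun i l => (i l : ℕ)

/-- The leading (largest) entry `i_1` of a (strictly decreasing) tuple. -/
def lead {r : ℕ} (i : Fin r → ℕ) : ℕ := if h : 0 < r then i ⟨0, h⟩ else 0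

/-- The multi-poly-Bernoulli-Carlitz numbers `BC_n^{s,j}`, defined by the generating series
`Σ_n BC_n^{s,j} z^n/Π(n) = Li_s(e_C(z)·u_{1 j_1}, u_{2 j_2}, …, u_{r j_r})/e_C(z)
 = Σ_{i_1 > ⋯ > i_r ≥ 0} e_C(z)^{q^{i_1}-1} ∏_l u_{l j_l}^{q^{i_l}}/L_{i_l}^{s_l}`,
written out coefficientwise (here `u l` is the datum `u_{l j_l} ∈ A`; the coefficient of
`z^n` in `e_C^{q^{i_1}-1}` vanishes whenever `i_1 > n`, so the sum below is complete). -/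
def MPBC {r : ℕ} (s : Fin r → ℕ) (u : Fin r → Polynomial F) (n : ℕ) : RatFunc F :=
  toK F (cfact F n) * ∑ i ∈ decTuples r (n + 1),
    PowerSeries.coeff n (eC F ^ ((q F) ^ lead i - 1)) *
      ∏ l, (toK F (u l)) ^ ((q F) ^ (i l)) * ((toK F (Lpoly F (i l))) ^ (s l))⁻¹

/-- The two-variable rational function field `K₂ = 𝔽_q(θ)(t)`. -/
abbrev K2 := RatFunc (RatFunc F)

/-- The inclusion `k = 𝔽_q(θ) → 𝔽_q(θ)(t)`. -/
def liftK : RatFunc F →+* K2 F :=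
  (algebraMap (Polynomial (RatFunc F)) (K2 F)).comp Polynomial.C

/-- The inclusion `A = 𝔽_q[θ] → 𝔽_q(θ)(t)`. -/
def liftA : Polynomial F →+* K2 F := (liftK F).comp (toK F)

/-- The inclusion of constants `𝔽_q → 𝔽_q(θ)(t)`. -/
def liftF : F →+* K2 F := (liftA F).comp Polynomial.C

/-- Substitution `θ ↦ t` on a polynomial `P ∈ 𝔽_q[θ]`, landing in `𝔽_q(θ)(t)`
(where `t` is the outer variable `RatFunc.X`); e.g. `D_i|_{θ=t}`. -/
def subT (P : Polynomial F) : K2 F :=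
  Polynomial.eval (RatFunc.X : K2 F) (P.map (liftF F))

/-- Evaluation of a polynomial in `A[t]` in `𝔽_q(θ)(t)` (coefficients included via
`A → 𝔽_q(θ)`, the variable `t` sent to the outer `RatFunc.X`). -/
def evalAT (h : Polynomial (Polynomial F)) : K2 F :=
  Polynomial.eval (RatFunc.X : K2 F) (h.map (liftA F))

/-- The power series `1 - Σ_{i≥0} (∏_{j=1}^{i}(t^{q^i} - θ^{q^j})/D_i|_{θ=t}) x^{q^i}`
appearing in the definition of the Anderson-Thakur polynomials. -/
def ATgen : PowerSeries (K2 F) :=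
  1 - PowerSeries.mk fun m => ∑ i ∈ Finset.range (m + 1),
    if (q F) ^ i = m then
      (∏ j ∈ Finset.range i,
        ((RatFunc.X : K2 F) ^ (q F) ^ i - (liftK F RatFunc.X) ^ (q F) ^ (j + 1))) *
        (subT F (Dpoly F i))⁻¹
    else 0

/-- `H : ℕ → A[t]` is the family of Anderson-Thakur polynomials iff
`{1 - Σ_i (∏_{j=1}^{i}(t^{q^i} - θ^{q^j})/D_i|_{θ=t}) x^{q^i}}⁻¹ = Σ_n (H_n/Γ_{n+1}|_{θ=t}) x^n`,
i.e. the product of the left-hand factor with the right-hand series equals `1`. -/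
def IsATFamily (H : ℕ → Polynomial (Polynomial F)) : Prop :=
  ATgen F * (PowerSeries.mk fun n => evalAT F (H n) * (subT F (cfact F n))⁻¹) = 1

/-- Reduction of a rational function `x ∈ k` whose denominator is coprime to `℘`
into `A/℘A`: reduce numerator and denominator (in lowest terms) and divide. -/
def redmod (℘ : Polynomial F) (x : RatFunc F) : Polynomial F ⧸ Ideal.span {℘} :=
  Ideal.Quotient.mk (Ideal.span {℘}) x.num *
    Ring.inverse (Ideal.Quotient.mk (Ideal.span {℘}) x.denom)

/-- The finite multiple zeta value `ζ_{𝒜_k}(s)_℘ ∈ A/℘A`: the sum of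
`1/(a_1^{s_1} ⋯ a_r^{s_r})` over monic `a_1, …, a_r ∈ A` with
`deg ℘ > deg a_1 > ⋯ > deg a_r ≥ 0`. -/
def finMZV (℘ : Polynomial F) {r : ℕ} (s : Fin r → ℕ) : Polynomial F ⧸ Ideal.span {℘} :=
  ∑ᶠ a ∈ {a : Fin r → Polynomial F |
      (∀ l, (a l).Monic) ∧ (StrictAnti fun l => (a l).natDegree) ∧
        ∀ l, (a l).natDegree < ℘.natDegree},
    ∏ l, Ring.inverse (Ideal.Quotient.mk (Ideal.span {℘}) (a l) ^ (s l))

/-- The finite Carlitz multiple polylogarithm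
`Li_{𝒜_k,s}(u_1, …, u_r)_℘ = Σ_{deg ℘ > i_1 > ⋯ > i_r ≥ 0} u_1^{q^{i_1}} ⋯ u_r^{q^{i_r}}
/ (L_{i_1}^{s_1} ⋯ L_{i_r}^{s_r}) ∈ A/℘A`. -/
def finCMPL (℘ : Polynomial F) {r : ℕ} (s : Fin r → ℕ) (u : Fin r → Polynomial F) :
    Polynomial F ⧸ Ideal.span {℘} :=
  ∑ i ∈ decTuples r ℘.natDegree,
    ∏ l, Ideal.Quotient.mk (Ideal.span {℘}) (u l) ^ ((q F) ^ (i l)) *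
      Ring.inverse (Ideal.Quotient.mk (Ideal.span {℘}) (Lpoly F (i l)) ^ (s l))

set_option linter.unusedSectionVars false

-- ===================== auxiliary development =====================


private lemma one_lt_q : 1 < q F := Fintype.one_lt_card

private lemma q_pos : 0 < q F := lt_trans one_pos (one_lt_q F)

private lemma char_data : ∃ p n : ℕ, p.Prime ∧ CharP F p ∧ 0 < n ∧ q F = p ^ n := by
  obtain ⟨p, hc⟩ := CharP.exists F
  haveI := hc
  obtain ⟨n, hp, hcard⟩ := FiniteField.card F p
  exact ⟨p, n, hp, hc, n.2, hcard⟩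

private lemma toK_injective : Function.Injective (toK F) :=
  IsFractionRing.injective (Polynomial F) (RatFunc F)

private lemma Xpow_inj {a b : ℕ} (h : (Polynomial.X : Polynomial F) ^ a = Polynomial.X ^ b) :
    a = b := by
  have := congrArg natDegree h
  simpa [natDegree_X_pow] using this

private lemma Dpoly_zero : Dpoly F 0 = 1 := by simp [Dpoly]

private lemma Lpoly_zero : Lpoly F 0 = 1 := by simp [Lpoly]

private lemma Dpoly_ne_zero (i : ℕ) : Dpoly F i ≠ 0 := by
  rw [Dpoly]
  rw [Finset.prod_ne_zero_iff]
  intro j hj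
  rw [Finset.mem_range] at hj
  refine sub_ne_zero_of_ne fun h => ?_
  have := Xpow_inj F h
  have h2 : (q F) ^ j < (q F) ^ i := Nat.pow_lt_pow_right (one_lt_q F) hj
  omega

private lemma Lpoly_ne_zero (i : ℕ) : Lpoly F i ≠ 0 := by
  rw [Lpoly]
  rw [Finset.prod_ne_zero_iff]
  intro j _
  refine sub_ne_zero_of_ne fun h => ?_
  nth_rewrite 1 [← pow_one (Polynomial.X : Polynomial F)] at h
  have := Xpow_inj F h
  have h2 : q F ≤ (q F) ^ (j+1) := Nat.le_self_pow (by omega) _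
  have := one_lt_q F
  omega


-- Frobenius on polynomial coefficients
private lemma poly_coeff_frob {R : Type} [CommRing R] (p n : ℕ) (hp : p.Prime) [CharP R p]
    (P : Polynomial R) (k : ℕ) : (P ^ p ^ n).coeff (p ^ n * k) = (P.coeff k) ^ p ^ n := by
  haveI : Fact p.Prime := ⟨hp⟩
  induction n generalizing k with
  | zero => simp
  | succ n ih =>
    have h1 : P ^ p ^ (n+1) = (P ^ p ^ n) ^ p := by
      rw [← pow_mul, pow_succ]
    have h2 : p ^ (n+1) * k = p * (p ^ n * k) := by ring
    rw [h1, h2]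
    have base : ∀ (Q0 : Polynomial R) (m : ℕ), (Q0 ^ p).coeff (p * m) = (Q0.coeff m) ^ p := by
      intro Q0 m
      rw [← Polynomial.map_frobenius_expand p Q0]
      rw [Polynomial.coeff_map]
      rw [Polynomial.coeff_expand hp.pos]
      simp [Nat.mul_div_cancel_left _ hp.pos, frobenius_def, Dvd.intro m rfl]
    rw [base, ih, ← pow_mul, pow_succ, mul_comm (p^n) p, pow_mul]

-- Frobenius on power series coefficients
private lemma ps_coeff_frob {R : Type} [CommRing R] (p n : ℕ) (hp : p.Prime) [CharP R p]
    (φ : PowerSeries R) (k : ℕ) :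
    PowerSeries.coeff (p ^ n * k) (φ ^ p ^ n) = (PowerSeries.coeff k φ) ^ p ^ n := by
  set N := p ^ n * k + 1 with hN
  have hlt : p ^ n * k < N := Nat.lt_succ_self _
  have h1 : PowerSeries.coeff (p^n*k) (φ ^ p^n)
      = PowerSeries.coeff (p^n*k) (((trunc N φ : Polynomial R) : PowerSeries R) ^ p^n) := by
    rw [← coeff_coe_trunc_of_lt hlt, ← trunc_trunc_pow, coeff_coe_trunc_of_lt hlt]
  rw [h1, ← Polynomial.coe_pow, Polynomial.coeff_coe]
  rw [poly_coeff_frob p n hp]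
  congr 1
  rw [coeff_trunc]
  have hk : k < N := by
    have : k ≤ p ^ n * k := Nat.le_mul_of_pos_left k (pow_pos hp.pos n)
    omega
  rw [if_pos hk]

-- K-level wrappers
private lemma K_coeff_frob (φ : PowerSeries (RatFunc F)) (k : ℕ) :
    PowerSeries.coeff (q F * k) (φ ^ q F)
      = (PowerSeries.coeff k φ) ^ q F := by
  obtain ⟨p, n, hp, hc, -, hq⟩ := char_data F
  haveI := hc
  haveI : CharP (RatFunc F) p :=
    charP_of_injective_ringHom (RingHom.injective ((toK F).comp Polynomial.C)) p
  rw [hq]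
  exact ps_coeff_frob p n hp φ k

private lemma K_frob_sub (x y : RatFunc F) (t : ℕ) :
    (x - y) ^ (q F) ^ t = x ^ (q F) ^ t - y ^ (q F) ^ t := by
  obtain ⟨p, n, hp, hc, -, hq⟩ := char_data F
  haveI := hc
  haveI : CharP (RatFunc F) p :=
    charP_of_injective_ringHom (RingHom.injective ((toK F).comp Polynomial.C)) p
  haveI : ExpChar (RatFunc F) p := ExpChar.prime hp
  rw [hq, ← pow_mul]
  exact sub_pow_expChar_pow ..

private lemma K_frob_sum {ι : Type} (s : Finset ι) (f : ι → RatFunc F) :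
    (∑ i ∈ s, f i) ^ (q F) = ∑ i ∈ s, (f i) ^ (q F) := by
  obtain ⟨p, n, hp, hc, -, hq⟩ := char_data F
  haveI := hc
  haveI : CharP (RatFunc F) p :=
    charP_of_injective_ringHom (RingHom.injective ((toK F).comp Polynomial.C)) p
  haveI : ExpChar (RatFunc F) p := ExpChar.prime hp
  rw [hq]
  exact sum_pow_char_pow ..

private lemma Fpoly_frob_sub (x y : Polynomial F) :
    (x - y) ^ (q F) = x ^ (q F) - y ^ (q F) := by
  obtain ⟨p, n, hp, hc, -, hq⟩ := char_data F
  haveI := hc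
  haveI : CharP (Polynomial F) p :=
    charP_of_injective_ringHom (Polynomial.C_injective (R := F)) p
  haveI : ExpChar (Polynomial F) p := ExpChar.prime hp
  rw [hq]
  exact sub_pow_expChar_pow ..


-- ===================== power series layer =====================

private def uC : PowerSeries (RatFunc F) :=
  PowerSeries.mk fun m => PowerSeries.coeff (m + 1) (eC F)

private def xC : PowerSeries (RatFunc F) := 1 - uC F

private def gC : PowerSeries (RatFunc F) :=
  PowerSeries.mk fun n => ∑ r ∈ Finset.range (n + 1),
    PowerSeries.coeff n ((xC F) ^ r)

private lemma coeff_uC (m : ℕ) :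
    PowerSeries.coeff m (uC F)
      = ∑ i ∈ Finset.range (m + 2), if m = (q F) ^ i - 1 then (toK F (Dpoly F i))⁻¹ else 0 := by
  rw [uC, coeff_mk, eC, coeff_mk]
  refine Finset.sum_congr rfl fun i _ => ?_
  refine if_congr ?_ rfl rfl
  have : 0 < (q F) ^ i := pow_pos (q_pos F) i
  omega

private lemma coeff_uC_zero : PowerSeries.coeff 0 (uC F) = 1 := by
  rw [coeff_uC]
  rw [show (0:ℕ) + 2 = 2 from rfl, Finset.sum_range_succ, Finset.sum_range_one]
  have h1 : (0:ℕ) = (q F) ^ 0 - 1 := by simp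
  have h2 : ¬ ((0:ℕ) = (q F) ^ 1 - 1) := by
    have := one_lt_q F
    simp only [pow_one]
    omega
  rw [if_pos h1, if_neg h2, Dpoly_zero]
  simp

private lemma coeff_xC_zero : PowerSeries.coeff 0 (xC F) = 0 := by
  rw [xC, map_sub, coeff_uC_zero]
  simp

private lemma coeff_xC (m : ℕ) (h : ¬ (q F ∣ m + 1)) :
    PowerSeries.coeff m (xC F) = 0 := by
  rcases Nat.eq_zero_or_pos m with hm | hm
  · subst hm; exact coeff_xC_zero F
  rw [xC, map_sub, coeff_uC]
  have h1 : PowerSeries.coeff m (1 : PowerSeries (RatFunc F)) = 0 := by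
    rw [PowerSeries.coeff_one, if_neg (by omega)]
  rw [h1]
  rw [Finset.sum_eq_zero, zero_sub, neg_zero]
  intro i _
  rw [if_neg]
  intro hc
  have hpos : 0 < (q F) ^ i := pow_pos (q_pos F) i
  have hmi : m + 1 = (q F) ^ i := by omega
  rcases Nat.eq_zero_or_pos i with hi | hi
  · subst hi; simp at hmi; omega
  · exact h (hmi ▸ dvd_pow_self (q F) (by omega))

private lemma coeff_xC_pow_lt (r n : ℕ) (h : n < r) :
    PowerSeries.coeff n ((xC F) ^ r) = 0 := by
  have h0 : PowerSeries.constantCoeff (xC F) = 0 := by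
    rw [← PowerSeries.coeff_zero_eq_constantCoeff_apply]; exact coeff_xC_zero F
  have h1 : (PowerSeries.X : PowerSeries (RatFunc F)) ∣ xC F :=
    PowerSeries.X_dvd_iff.mpr h0
  have h2 : (PowerSeries.X : PowerSeries (RatFunc F)) ^ r ∣ (xC F) ^ r :=
    pow_dvd_pow_of_dvd h1 r
  exact PowerSeries.X_pow_dvd_iff.mp h2 n h

private lemma coeff_xC_pow (r m : ℕ) (h : ¬ (q F ∣ m + r)) :
    PowerSeries.coeff m ((xC F) ^ r) = 0 := by
  induction r generalizing m with
  | zero =>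
    rw [pow_zero, PowerSeries.coeff_one, if_neg (by intro h0; subst h0; simp at h)]
  | succ r ih =>
    rw [pow_succ, PowerSeries.coeff_mul]
    refine Finset.sum_eq_zero fun ab hab => ?_
    rw [Finset.HasAntidiagonal.mem_antidiagonal] at hab
    by_cases h1 : q F ∣ ab.1 + r
    · by_cases h2 : q F ∣ ab.2 + 1
      · exfalso
        apply h
        have : (ab.1 + r) + (ab.2 + 1) = m + (r + 1) := by omega
        exact this ▸ Dvd.dvd.add h1 h2
      · rw [coeff_xC F ab.2 h2, mul_zero]
    · rw [ih ab.1 h1, zero_mul]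

private lemma mul_u_g : uC F * gC F = 1 := by
  ext n
  have hu : uC F = 1 - xC F := by rw [xC]; ring
  rw [hu, sub_mul, one_mul, map_sub]
  have hg : PowerSeries.coeff n (gC F)
      = ∑ r ∈ Finset.range (n + 1), PowerSeries.coeff n ((xC F) ^ r) := by
    rw [gC, coeff_mk]
  have hxg : PowerSeries.coeff n (xC F * gC F)
      = ∑ r ∈ Finset.range (n + 1), PowerSeries.coeff n ((xC F) ^ (r + 1)) := by
    rw [PowerSeries.coeff_mul]
    have step : ∀ ab ∈ Finset.HasAntidiagonal.antidiagonal n,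
        PowerSeries.coeff ab.1 (xC F) * PowerSeries.coeff ab.2 (gC F)
        = ∑ r ∈ Finset.range (n + 1), PowerSeries.coeff ab.1 (xC F) *
            PowerSeries.coeff ab.2 ((xC F) ^ r) := by
      intro ab hab
      rw [Finset.HasAntidiagonal.mem_antidiagonal] at hab
      rw [gC, coeff_mk, Finset.mul_sum]
      refine Finset.sum_subset (Finset.range_subset_range.mpr (by omega)) ?_
      intro r _ hr
      rw [Finset.mem_range, not_lt] at hr
      rw [coeff_xC_pow_lt F r ab.2 (by omega), mul_zero]
    rw [Finset.sum_congr rfl step, Finset.sum_comm]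
    refine Finset.sum_congr rfl fun r _ => ?_
    rw [pow_succ', PowerSeries.coeff_mul]
  rw [hg, hxg, ← Finset.sum_sub_distrib, Finset.sum_range_sub']
  rw [pow_zero, coeff_xC_pow_lt F (n+1) n (Nat.lt_succ_self n), sub_zero]

private lemma constCoeff_uC : PowerSeries.constantCoeff (uC F) = 1 := by
  rw [← PowerSeries.coeff_zero_eq_constantCoeff_apply]
  exact coeff_uC_zero F

private lemma inv_u_eq_g :
    (PowerSeries.mk fun m => PowerSeries.coeff (m + 1) (eC F))⁻¹ = gC F := by
  have hne : PowerSeries.constantCoeff (uC F) ≠ 0 := by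
    rw [constCoeff_uC F]; exact one_ne_zero
  have h : gC F = (uC F)⁻¹ :=
    (PowerSeries.eq_inv_iff_mul_eq_one hne).mpr (by rw [mul_comm]; exact mul_u_g F)
  rw [show (PowerSeries.mk fun m => PowerSeries.coeff (m + 1) (eC F)) = uC F from rfl]
  exact h.symm


private lemma gC_frob (k : ℕ) :
    PowerSeries.coeff (q F * k) (gC F)
      = (PowerSeries.coeff k (gC F)) ^ (q F) := by
  have hq := one_lt_q F
  rw [gC, coeff_mk, coeff_mk]
  have step1 : ∑ r ∈ Finset.range (q F * k + 1),
        PowerSeries.coeff (q F * k) ((xC F) ^ r)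
      = ∑ r ∈ (Finset.range (q F * k + 1)).filter (fun r => q F ∣ r),
        PowerSeries.coeff (q F * k) ((xC F) ^ r) := by
    refine (Finset.sum_filter_of_ne fun r _ hne => ?_).symm
    by_contra hd
    exact hne (coeff_xC_pow F r (q F * k) (fun hdd => hd ((Nat.dvd_add_right ⟨k, rfl⟩).mp hdd)))
  have step2 : ∑ r ∈ (Finset.range (q F * k + 1)).filter (fun r => q F ∣ r),
        PowerSeries.coeff (q F * k) ((xC F) ^ r)
      = ∑ s ∈ Finset.range (k + 1),
        PowerSeries.coeff (q F * k) ((xC F) ^ (q F * s)) := by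
    refine Finset.sum_nbij' (fun r => r / q F) (fun s => q F * s) ?_ ?_ ?_ ?_ ?_
    · intro r hr
      rw [Finset.mem_filter, Finset.mem_range] at hr
      obtain ⟨c, rfl⟩ := hr.2
      simp only [Finset.mem_range]
      rw [Nat.mul_div_cancel_left c (by omega)]
      have h1 : q F * c ≤ q F * k := by omega
      have := Nat.le_of_mul_le_mul_left h1 (by omega)
      omega
    · intro s hs
      rw [Finset.mem_range] at hs
      simp only [Finset.mem_filter, Finset.mem_range]
      have : q F * s ≤ q F * k := Nat.mul_le_mul_left _ (by omega)
      exact ⟨by omega, ⟨s, rfl⟩⟩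
    · intro r hr
      rw [Finset.mem_filter] at hr
      exact Nat.mul_div_cancel' hr.2
    · intro s _
      exact Nat.mul_div_cancel_left s (by omega)
    · intro r hr
      rw [Finset.mem_filter] at hr
      rw [Nat.mul_div_cancel' hr.2]
  rw [step1, step2]
  have step3 : ∀ s : ℕ, PowerSeries.coeff (q F * k) ((xC F) ^ (q F * s))
      = (PowerSeries.coeff k ((xC F) ^ s)) ^ (q F) := by
    intro s
    rw [mul_comm (q F) s, pow_mul]
    exact K_coeff_frob F ((xC F) ^ s) k
  rw [Finset.sum_congr rfl fun s _ => step3 s, ← K_frob_sum]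


-- ===================== partial fraction identity =====================

private def th : RatFunc F := toK F Polynomial.X

private lemma th_nodes_inj (m : ℕ) :
    Set.InjOn (fun t : ℕ => (th F) ^ (q F) ^ t) ↑(Finset.range (m + 1)) := by
  intro a _ b _ h
  simp only [th] at h
  rw [← map_pow, ← map_pow] at h
  have h2 := toK_injective F h
  have h3 := Xpow_inj F h2
  exact Nat.pow_right_injective (one_lt_q F) h3

private lemma prod_erase_eq (m t : ℕ) (ht : t ≤ m) :
    ∏ j ∈ (Finset.range (m + 1)).erase t, ((th F) ^ (q F) ^ t - (th F) ^ (q F) ^ j)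
      = toK F (Dpoly F t) * (toK F (Lpoly F (m - t))) ^ (q F) ^ t := by
  have hsplit : (Finset.range (m + 1)).erase t
      = Finset.range t ∪ Finset.Ico (t + 1) (m + 1) := by
    ext j
    simp only [Finset.mem_erase, Finset.mem_range, Finset.mem_union, Finset.mem_Ico]
    omega
  have hdisj : Disjoint (Finset.range t) (Finset.Ico (t + 1) (m + 1)) := by
    rw [Finset.disjoint_left]
    intro j hj hj2
    rw [Finset.mem_range] at hj
    rw [Finset.mem_Ico] at hj2
    omega
  rw [hsplit, Finset.prod_union hdisj]
  congr 1
  · rw [Dpoly, map_prod]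
    refine Finset.prod_congr rfl fun j _ => ?_
    rw [map_sub, map_pow, map_pow, th]
  · rw [Finset.prod_Ico_eq_prod_range]
    have hc : m + 1 - (t + 1) = m - t := by omega
    rw [hc, Lpoly, map_prod, ← Finset.prod_pow]
    refine Finset.prod_congr rfl fun j _ => ?_
    rw [map_sub, map_pow, K_frob_sub F]
    simp only [th]
    congr 1
    rw [← pow_mul, ← pow_add]
    congr 1
    congr 1
    omega

private lemma pf_identity (m : ℕ) (hm : 1 ≤ m) :
    ∑ t ∈ Finset.range (m + 1),
      (toK F (Dpoly F t) * (toK F (Lpoly F (m - t))) ^ (q F) ^ t)⁻¹ = 0 := by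
  classical
  set v : ℕ → RatFunc F := fun t => (th F) ^ (q F) ^ t with hv
  have hinj := th_nodes_inj F m
  have hsum := Lagrange.sum_basis (v := v) (s := Finset.range (m + 1)) hinj
    ⟨0, Finset.mem_range.mpr (by omega)⟩
  have hco := congrArg (fun P => Polynomial.coeff P m) hsum
  simp only [Polynomial.finset_sum_coeff] at hco
  have h1 : Polynomial.coeff (1 : Polynomial (RatFunc F)) m = 0 := by
    rw [Polynomial.coeff_one, if_neg (by omega)]
  rw [h1] at hco
  have hbasis : ∀ t ∈ Finset.range (m + 1),
      (Lagrange.basis (Finset.range (m + 1)) v t).coeff m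
        = (∏ j ∈ (Finset.range (m + 1)).erase t, (v t - v j))⁻¹ := by
    intro t ht
    rw [Lagrange.basis]
    have hrw : ∀ j ∈ (Finset.range (m + 1)).erase t,
        Lagrange.basisDivisor (v t) (v j)
          = Polynomial.C ((v t - v j)⁻¹) * (Polynomial.X - Polynomial.C (v j)) := by
      intro j _
      rfl
    rw [Finset.prod_congr rfl hrw, Finset.prod_mul_distrib, ← map_prod]
    rw [Polynomial.coeff_C_mul]
    have hM : (∏ j ∈ (Finset.range (m + 1)).erase t,
        (Polynomial.X - Polynomial.C (v j))).coeff m = 1 := by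
      have hmonic : (∏ j ∈ (Finset.range (m + 1)).erase t,
          (Polynomial.X - Polynomial.C (v j))).Monic :=
        Polynomial.monic_prod_of_monic _ _ fun j _ => Polynomial.monic_X_sub_C _
      have hdeg : (∏ j ∈ (Finset.range (m + 1)).erase t,
          (Polynomial.X - Polynomial.C (v j))).natDegree = m := by
        rw [Polynomial.natDegree_prod_of_monic _ _ fun j _ => Polynomial.monic_X_sub_C _]
        simp [Finset.card_erase_of_mem ht]
      have hcn := hmonic.coeff_natDegree
      rw [hdeg] at hcn
      exact hcn
    rw [hM, mul_one, ← Finset.prod_inv_distrib]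
  rw [Finset.sum_congr rfl hbasis] at hco
  rw [← hco]
  refine Finset.sum_congr rfl fun t ht => ?_
  rw [Finset.mem_range] at ht
  rw [prod_erase_eq F m t (by omega)]


-- ===================== recurrence and main induction =====================

private lemma rec_identity (m : ℕ) (hm : 1 ≤ m) :
    ∑ i ∈ Finset.range (m + 1),
      (toK F (Dpoly F i))⁻¹
        * PowerSeries.coeff ((q F) ^ m - (q F) ^ i) (gC F) = 0 := by
  have hq := one_lt_q F
  set n : ℕ := (q F) ^ m - 1 with hn
  have hqm : (1:ℕ) < (q F) ^ m := by
    calc (1:ℕ) < q F := hq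
    _ ≤ (q F) ^ m := Nat.le_self_pow (by omega) _
  have hn1 : n + 1 = (q F) ^ m := by omega
  have h0 : PowerSeries.coeff n (uC F * gC F) = 0 := by
    rw [mul_u_g, PowerSeries.coeff_one, if_neg (by omega)]
  rw [PowerSeries.coeff_mul, Finset.Nat.sum_antidiagonal_eq_sum_range_succ_mk] at h0
  have hstep1 : ∀ k ∈ Finset.range (n + 1),
      PowerSeries.coeff k (uC F)
          * PowerSeries.coeff (n - k) (gC F)
        = ∑ i ∈ Finset.range (n + 2), if k = (q F) ^ i - 1 then
            (toK F (Dpoly F i))⁻¹ * PowerSeries.coeff (n - k) (gC F) else 0 := by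
    intro k hk
    rw [Finset.mem_range] at hk
    rw [coeff_uC, Finset.sum_mul]
    simp only [ite_mul, zero_mul]
    refine Finset.sum_subset (Finset.range_subset_range.mpr (by omega)) ?_
    intro i _ hi2
    rw [Finset.mem_range, not_lt] at hi2
    rw [if_neg]
    intro hc
    have h2 : k + 2 ≤ (q F)^i := by
      calc k + 2 ≤ i := hi2
      _ ≤ 2 ^ i := le_of_lt (Nat.lt_two_pow_self (n := i))
      _ ≤ (q F) ^ i := Nat.pow_le_pow_left (by omega) i
    have h3 : 0 < (q F) ^ i := pow_pos (q_pos F) i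
    omega
  rw [Finset.sum_congr rfl hstep1, Finset.sum_comm] at h0
  have hstep2 : ∀ i ∈ Finset.range (n + 2),
      (∑ k ∈ Finset.range (n + 1), if k = (q F) ^ i - 1 then
          (toK F (Dpoly F i))⁻¹ * PowerSeries.coeff (n - k) (gC F) else 0)
        = if i ≤ m then
            (toK F (Dpoly F i))⁻¹
              * PowerSeries.coeff ((q F) ^ m - (q F) ^ i) (gC F) else 0 := by
    intro i _
    rw [Finset.sum_ite_eq' (Finset.range (n + 1)) ((q F) ^ i - 1)]
    have hpos : 0 < (q F) ^ i := pow_pos (q_pos F) i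
    by_cases hi : i ≤ m
    · have hle : (q F) ^ i ≤ (q F) ^ m := Nat.pow_le_pow_right (by omega) hi
      have hidx : n - ((q F) ^ i - 1) = (q F) ^ m - (q F) ^ i := by omega
      rw [if_pos (Finset.mem_range.mpr (by omega)), if_pos hi, hidx]
    · rw [if_neg, if_neg hi]
      rw [Finset.mem_range]
      have : (q F) ^ m < (q F) ^ i := Nat.pow_lt_pow_right hq (by omega)
      omega
  rw [Finset.sum_congr rfl hstep2] at h0
  have hsub : Finset.range (m + 1) ⊆ Finset.range (n + 2) := by
    refine Finset.range_subset_range.mpr ?_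
    have : m < (q F) ^ m := Nat.lt_pow_self (n := m) hq
    omega
  rw [← Finset.sum_subset hsub (fun i _ hi => ?_)] at h0
  · rw [← h0]
    refine Finset.sum_congr rfl fun i hi => ?_
    rw [Finset.mem_range] at hi
    rw [if_pos (by omega)]
  · rw [Finset.mem_range, not_lt] at hi
    rw [if_neg (by omega)]

private lemma cQpow_iter : ∀ (i m : ℕ), i ≤ m →
    PowerSeries.coeff ((q F) ^ m - (q F) ^ i) (gC F)
      = (PowerSeries.coeff ((q F) ^ (m - i) - 1) (gC F)) ^ (q F) ^ i := by
  intro i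
  induction i with
  | zero => intro m _; simp
  | succ i ih =>
    intro m him
    have hm1 : 1 ≤ m := by omega
    have hle : (q F) ^ i ≤ (q F) ^ (m - 1) := Nat.pow_le_pow_right (by have := q_pos F; omega) (by omega)
    obtain ⟨e, he⟩ := Nat.le.dest hle
    have h1 : (q F) ^ m = q F * (q F) ^ (m - 1) := by
      rw [← pow_succ']
      congr 1
      omega
    have h2 : (q F) ^ (i + 1) = q F * (q F) ^ i := by rw [pow_succ']
    have h3 : q F * (q F) ^ (m - 1) = q F * (q F) ^ i + q F * e := by
      rw [← he]; ring
    have hkey : (q F) ^ m - (q F) ^ (i + 1) = q F * e := by omega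
    have hkey2 : (q F) ^ (m - 1) - (q F) ^ i = e := by omega
    rw [hkey, ← hkey2, gC_frob F, ih (m - 1) (by omega), ← pow_mul, ← pow_succ]
    have h4 : m - 1 - i = m - (i + 1) := by omega
    rw [h4]

private lemma coeff_gC_zero : PowerSeries.coeff 0 (gC F) = 1 := by
  rw [gC, coeff_mk, Finset.sum_range_one, pow_zero, PowerSeries.coeff_one, if_pos rfl]

private lemma cmain : ∀ m : ℕ,
    PowerSeries.coeff ((q F) ^ m - 1) (gC F) = (toK F (Lpoly F m))⁻¹ := by
  intro m
  induction m using Nat.strong_induction_on with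
  | _ m IH =>
    rcases Nat.eq_zero_or_pos m with hm | hm
    · subst hm
      simp only [pow_zero, Nat.sub_self, coeff_gC_zero, Lpoly_zero, map_one, inv_one]
    · have hrec := rec_identity F m hm
      have hpf := pf_identity F m hm
      rw [Finset.sum_range_succ'] at hrec hpf
      have hterm : ∀ i ∈ Finset.range m,
          (toK F (Dpoly F (i + 1)))⁻¹
              * PowerSeries.coeff ((q F) ^ m - (q F) ^ (i + 1)) (gC F)
            = (toK F (Dpoly F (i + 1))
                * (toK F (Lpoly F (m - (i + 1)))) ^ (q F) ^ (i + 1))⁻¹ := by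
        intro i hi
        rw [Finset.mem_range] at hi
        rw [cQpow_iter F (i + 1) m (by omega)]
        rw [IH (m - (i + 1)) (by omega)]
        rw [mul_inv, ← inv_pow]
      rw [Finset.sum_congr rfl hterm] at hrec
      have h00 : (toK F (Dpoly F 0))⁻¹
          * PowerSeries.coeff ((q F) ^ m - (q F) ^ 0) (gC F)
          = PowerSeries.coeff ((q F) ^ m - 1) (gC F) := by
        rw [Dpoly_zero, map_one, inv_one, one_mul, pow_zero]
      have h01 : (toK F (Dpoly F 0) * (toK F (Lpoly F (m - 0))) ^ (q F) ^ 0)⁻¹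
          = (toK F (Lpoly F m))⁻¹ := by
        rw [Dpoly_zero, map_one, one_mul, pow_zero, pow_one, Nat.sub_zero]
      rw [h00] at hrec
      rw [h01] at hpf
      have := sub_eq_zero.mpr (hrec.trans hpf.symm)
      rw [add_sub_add_left_eq_sub, sub_eq_zero] at this
      exact this


-- ===================== digits and factorial identities =====================

private lemma digits_q_pow_sub_one : ∀ i : ℕ,
    Nat.digits (q F) ((q F) ^ i - 1) = List.replicate i (q F - 1) := by
  intro i
  induction i with
  | zero => simp
  | succ i ih =>
    have hq := one_lt_q F
    have hqi : 0 < (q F) ^ i := pow_pos (q_pos F) i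
    have hle : (q F) ^ i * q F ≥ q F := Nat.le_mul_of_pos_left _ hqi
    have hpow : (q F) ^ (i + 1) = (q F) ^ i * q F := pow_succ _ _
    have hpos : 0 < (q F) ^ (i + 1) - 1 := by omega
    rw [Nat.digits_def' hq hpos]
    have hkey : (q F) ^ (i + 1) - 1 = (q F - 1) + ((q F) ^ i - 1) * q F := by
      have : ((q F) ^ i - 1) * q F = (q F) ^ i * q F - q F := by
        rw [Nat.sub_mul, one_mul]
      omega
    have hmod : ((q F) ^ (i + 1) - 1) % q F = q F - 1 := by
      rw [hkey, Nat.add_mul_mod_self_right, Nat.mod_eq_of_lt (by omega)]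
    have hdiv : ((q F) ^ (i + 1) - 1) / q F = (q F) ^ i - 1 := by
      rw [hkey, Nat.add_mul_div_right _ _ (q_pos F), Nat.div_eq_of_lt (by omega), zero_add]
    rw [hmod, hdiv, ih, List.replicate_succ]

private lemma cfact_q_pow_sub_one (i : ℕ) :
    cfact F ((q F) ^ i - 1) = ∏ j ∈ Finset.range i, (Dpoly F j) ^ (q F - 1) := by
  rw [cfact, digits_q_pow_sub_one F i, List.length_replicate]
  refine Finset.prod_congr rfl fun j hj => ?_
  rw [Finset.mem_range] at hj
  congr 1
  rw [List.getD_eq_getElem?_getD, List.getElem?_replicate, if_pos hj, Option.getD_some]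

private lemma Dpoly_succ (i : ℕ) : Dpoly F (i + 1)
    = (Polynomial.X ^ (q F) ^ (i + 1) - Polynomial.X) * (Dpoly F i) ^ (q F) := by
  rw [Dpoly, Finset.prod_range_succ']
  have h0 : (Polynomial.X : Polynomial F) ^ (q F) ^ (i+1) - Polynomial.X ^ (q F) ^ 0
      = Polynomial.X ^ (q F) ^ (i+1) - Polynomial.X := by
    rw [pow_zero, pow_one]
  rw [h0, mul_comm]
  congr 1
  rw [Dpoly, ← Finset.prod_pow]
  refine Finset.prod_congr rfl fun j _ => ?_
  rw [Fpoly_frob_sub F, ← pow_mul, ← pow_mul, ← pow_succ, ← pow_succ]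

private lemma Dpoly_eq (i : ℕ) : Dpoly F i
    = (-1 : Polynomial F) ^ i * (Lpoly F i * ∏ j ∈ Finset.range i, (Dpoly F j) ^ (q F - 1)) := by
  induction i with
  | zero => simp [Dpoly_zero, Lpoly_zero]
  | succ i ih =>
    have hq := q_pos F
    rw [Dpoly_succ F i, Finset.prod_range_succ]
    rw [show Lpoly F (i + 1) = Lpoly F i * (Polynomial.X - Polynomial.X ^ (q F) ^ (i + 1)) from
      Finset.prod_range_succ _ _]
    have hpow : (Dpoly F i) ^ (q F) = (Dpoly F i) ^ (q F - 1) * Dpoly F i := by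
      rw [← pow_succ]
      congr 1
      omega
    rw [hpow, ih]
    ring


/-- For every `i ≥ 0`, `BC_{q^i − 1} = (−1)^i D_i / L_i^2 = Π(q^i − 1)/L_i`;
in particular `BC_{q^i − 1} ≠ 0` and `BC_{q^i − 1}/Π(q^i − 1) = 1/L_i`. -/
theorem BCnum_qpow_sub_one (i : ℕ) :
    BCnum F ((q F) ^ i - 1) =
        (-1 : RatFunc F) ^ i * toK F (Dpoly F i) / (toK F (Lpoly F i)) ^ 2 ∧
    BCnum F ((q F) ^ i - 1) =
        toK F (cfact F ((q F) ^ i - 1)) / toK F (Lpoly F i) ∧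
    BCnum F ((q F) ^ i - 1) ≠ 0 ∧
    BCnum F ((q F) ^ i - 1) / toK F (cfact F ((q F) ^ i - 1)) = (toK F (Lpoly F i))⁻¹ := by
  have hll : toK F (Lpoly F i) ≠ 0 :=
    (map_ne_zero_iff (toK F) (toK_injective F)).mpr (Lpoly_ne_zero F i)
  have hcf0 : toK F (cfact F ((q F) ^ i - 1)) ≠ 0 := by
    refine (map_ne_zero_iff (toK F) (toK_injective F)).mpr ?_
    rw [cfact_q_pow_sub_one F i]
    exact Finset.prod_ne_zero_iff.mpr fun j _ => pow_ne_zero _ (Dpoly_ne_zero F j)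
  have hBC : BCnum F ((q F) ^ i - 1)
      = toK F (cfact F ((q F) ^ i - 1)) * (toK F (Lpoly F i))⁻¹ := by
    rw [BCnum, inv_u_eq_g F, cmain F i]
  have hD : toK F (Dpoly F i)
      = (-1 : RatFunc F) ^ i * (toK F (Lpoly F i) * toK F (cfact F ((q F) ^ i - 1))) := by
    have h := congrArg (toK F) (Dpoly_eq F i)
    rw [map_mul, map_mul, map_pow, map_neg, map_one, ← cfact_q_pow_sub_one F i] at h
    exact h
  have hsq : ((-1 : RatFunc F)) ^ i * (-1) ^ i = 1 := by
    rw [← mul_pow]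
    norm_num
  refine ⟨?_, ?_, ?_, ?_⟩
  · rw [hBC, hD, pow_two, eq_div_iff (mul_ne_zero hll hll)]
    calc toK F (cfact F ((q F) ^ i - 1)) * (toK F (Lpoly F i))⁻¹
          * (toK F (Lpoly F i) * toK F (Lpoly F i))
        = toK F (cfact F ((q F) ^ i - 1)) * toK F (Lpoly F i)
            * ((toK F (Lpoly F i))⁻¹ * toK F (Lpoly F i)) := by ring
      _ = toK F (cfact F ((q F) ^ i - 1)) * toK F (Lpoly F i) := by
          rw [inv_mul_cancel₀ hll, mul_one]
      _ = ((-1 : RatFunc F) ^ i * (-1) ^ i)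
            * (toK F (Lpoly F i) * toK F (cfact F ((q F) ^ i - 1))) := by
          rw [hsq, one_mul]; ring
      _ = (-1 : RatFunc F) ^ i
            * ((-1 : RatFunc F) ^ i * (toK F (Lpoly F i) * toK F (cfact F ((q F) ^ i - 1)))) := by
          ring
  · rw [hBC, div_eq_mul_inv]
  · rw [hBC]
    exact mul_ne_zero hcf0 (inv_ne_zero hll)
  · rw [hBC, mul_comm, mul_div_assoc, div_self hcf0, mul_one]

end Carlitz
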